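/- Let ε, η, K₀, D̄, λ_K be positive real constants, let 0 < m_min ≤ m_max and K* be reals with K* > m_max·D̄, and let γ satisfy 0 < γ < η·m_min·K₀/(λ_K·m_min + ε). Let m : ℝ → ℝ satisfy m_min ≤ m(t) ≤ m_max for all t, let d̄ : ℝ → ℝ³ satisfy ‖d̄(t)‖₂ < D̄ for all t, let K : ℝ → ℝ be differentiable with K(0) ≥ K₀, K(t) ≤ K* for all t ≥ 0, and K'(t) = η·(‖u(t)‖₂ − K(t) + K₀) for all t ≥ 0, where u(t) := −(K(t)/ε)·s(t), and let s : ℝ → ℝ³ be differentiable with s'(t) = (1/m(t))·u(t) + d̄(t). Define V(t) := (1/2)·‖s(t)‖₂² + (1/(2γ))·(K(t) − K*)², λ_s := (K* − m_max·D̄)/m_max, and λ := √2·min(λ_s, λ_K·√γ). Then for every t ≥ 0 with ‖s(t)‖₂ > ε, the derivative of V satisfies V'(t) < −λ·√(V(t)). -/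

import Mathlib

/-- Euclidean norm on `ℝ³`. -/
noncomputable def norm2 (x : Fin 3 → ℝ) : ℝ := Real.sqrt (∑ i, x i ^ 2)

lemma norm2_nonneg (x : Fin 3 → ℝ) : 0 ≤ norm2 x := Real.sqrt_nonneg _

lemma sq_norm2 (x : Fin 3 → ℝ) : norm2 x ^ 2 = ∑ i, x i ^ 2 :=
  Real.sq_sqrt (Finset.sum_nonneg fun i _ => sq_nonneg _)

lemma norm2_smul (c : ℝ) (x : Fin 3 → ℝ) : norm2 (c • x) = |c| * norm2 x := by
  unfold norm2
  have h : ∑ i, (c • x) i ^ 2 = c ^ 2 * ∑ i, x i ^ 2 := by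
    simp [Finset.mul_sum, mul_pow]
  rw [h, Real.sqrt_mul (sq_nonneg c), Real.sqrt_sq_eq_abs]

lemma cauchy3 (x y : Fin 3 → ℝ) : ∑ i, x i * y i ≤ norm2 x * norm2 y :=
  Real.sum_mul_le_sqrt_mul_sqrt _ _ _

lemma sqrt_add_le' {a b : ℝ} (ha : 0 ≤ a) (hb : 0 ≤ b) :
    Real.sqrt (a + b) ≤ Real.sqrt a + Real.sqrt b := by
  have h1 : a + b ≤ (Real.sqrt a + Real.sqrt b) ^ 2 := by
    nlinarith [Real.sq_sqrt ha, Real.sq_sqrt hb, Real.sqrt_nonneg a, Real.sqrt_nonneg b]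
  calc Real.sqrt (a + b) ≤ Real.sqrt ((Real.sqrt a + Real.sqrt b) ^ 2) := Real.sqrt_le_sqrt h1
    _ = Real.sqrt a + Real.sqrt b := Real.sqrt_sq (by positivity)

set_option maxHeartbeats 1600000 in
/-- Theorem 1 (ROCS reaching condition): with the adaptive smooth control
`u = −(K/ε)s`, the adaptation law `K' = η(‖u‖₂ − K + K₀)`, bounded mass and
disturbance, `K ≤ K*` with `K* > m_max·D̄`, and
`γ < η·m_min·K₀/(lam_K·m_min + ε)`, the Lyapunov function
`V = ½‖s‖₂² + (1/2γ)(K − K*)²` satisfies `V' < −lam·√V` whenever `‖s‖₂ > ε`,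
where `lam = √2·min(lam_s, lam_K√γ)` and `lam_s = (K* − m_max·D̄)/m_max`. -/
theorem rocs_reaching_condition
    (ε η K₀ Dbar lamK mmin mmax Kstar γ : ℝ)
    (hε : 0 < ε) (hη : 0 < η) (hK₀ : 0 < K₀) (hD : 0 < Dbar) (hlamK : 0 < lamK)
    (hm : 0 < mmin) (hmm : mmin ≤ mmax) (hKs : mmax * Dbar < Kstar)
    (hγ : 0 < γ) (hγ2 : γ < η * mmin * K₀ / (lamK * mmin + ε))
    (m : ℝ → ℝ) (hmb : ∀ t, mmin ≤ m t ∧ m t ≤ mmax)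
    (d : ℝ → Fin 3 → ℝ) (hd : ∀ t, norm2 (d t) < Dbar)
    (K : ℝ → ℝ) (hKdiff : Differentiable ℝ K) (hK0 : K₀ ≤ K 0)
    (hKub : ∀ t, 0 ≤ t → K t ≤ Kstar)
    (s : ℝ → Fin 3 → ℝ) (hs : Differentiable ℝ s)
    (u : ℝ → Fin 3 → ℝ) (hu : ∀ t, u t = -(K t / ε) • s t)
    (hKlaw : ∀ t, 0 ≤ t → deriv K t = η * (norm2 (u t) - K t + K₀))
    (hsd : ∀ t, deriv s t = (1 / m t) • u t + d t) :
    ∀ t, 0 ≤ t → ε < norm2 (s t) →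
      deriv (fun τ => (1 / 2 : ℝ) * (∑ i, (s τ i) ^ 2)
          + (1 / (2 * γ)) * (K τ - Kstar) ^ 2) t
        < -(Real.sqrt 2 * min ((Kstar - mmax * Dbar) / mmax) (lamK * Real.sqrt γ)) *
            Real.sqrt ((1 / 2 : ℝ) * (∑ i, (s t i) ^ 2)
              + (1 / (2 * γ)) * (K t - Kstar) ^ 2) := by
  have hmmax : 0 < mmax := lt_of_lt_of_le hm hmm
  -- Step 1 : K₀ ≤ K t for all t ≥ 0
  have hKlb : ∀ t, 0 ≤ t → K₀ ≤ K t := by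
    intro t ht
    set g : ℝ → ℝ := fun τ => Real.exp (η * τ) * (K τ - K₀) with hg
    have hgd : ∀ τ : ℝ, HasDerivAt g
        (η * Real.exp (η * τ) * (K τ - K₀) + Real.exp (η * τ) * deriv K τ) τ := by
      intro τ
      have h1 : HasDerivAt (fun x : ℝ => Real.exp (η * x)) (Real.exp (η * τ) * η) τ := by
        simpa using ((hasDerivAt_id τ).const_mul η).exp
      have h2 : HasDerivAt (fun x => K x - K₀) (deriv K τ) τ :=
        ((hKdiff τ).hasDerivAt).sub_const K₀
      have := h1.fun_mul h2
      exact this.congr_deriv (by ring)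
    have hmono : MonotoneOn g (Set.Ici (0 : ℝ)) := by
      apply monotoneOn_of_deriv_nonneg (convex_Ici 0)
      · exact ((Real.continuous_exp.comp (continuous_const.mul continuous_id)).mul
          ((hKdiff.continuous).sub continuous_const)).continuousOn
      · intro x _
        exact ((hgd x).differentiableAt).differentiableWithinAt
      · intro x hx
        rw [interior_Ici] at hx
        rw [(hgd x).deriv, hKlaw x (le_of_lt hx)]
        have : η * Real.exp (η * x) * (K x - K₀) +
            Real.exp (η * x) * (η * (norm2 (u x) - K x + K₀))
            = Real.exp (η * x) * η * norm2 (u x) := by ring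
        rw [this]
        exact mul_nonneg (by positivity) (norm2_nonneg _)
    have h0 : g 0 ≤ g t := by
      rcases eq_or_lt_of_le ht with h | h
      · rw [h]
      · exact hmono (Set.self_mem_Ici) (Set.mem_Ici.2 ht) ht
    have hg0 : 0 ≤ g 0 := by
      simp only [hg, mul_zero, Real.exp_zero, one_mul]
      linarith
    have h2 : 0 ≤ Real.exp (η * t) * (K t - K₀) := le_trans hg0 h0
    have hexp : 0 < Real.exp (η * t) := Real.exp_pos _
    nlinarith [h2, hexp]
  intro t ht hst
  obtain ⟨hm1, hm2⟩ := hmb t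
  have hmt : 0 < m t := lt_of_lt_of_le hm hm1
  have hKt : K₀ ≤ K t := hKlb t ht
  have hKtpos : 0 < K t := lt_of_lt_of_le hK₀ hKt
  have hKub' : K t ≤ Kstar := hKub t ht
  set S := norm2 (s t) with hSdef
  set Δ := Kstar - K t with hΔdef
  have hΔ : 0 ≤ Δ := by simp [hΔdef]; linarith
  have hSpos : 0 < S := lt_trans hε hst
  have hS2 : (∑ i, s t i ^ 2) = S ^ 2 := (sq_norm2 (s t)).symm
  -- norm of u
  have hnu : norm2 (u t) = (K t / ε) * S := by
    rw [hu t, norm2_smul, abs_neg, abs_of_pos (by positivity)]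
  -- derivative of V
  have hsi : ∀ i, HasDerivAt (fun τ => s τ i) (deriv s t i) t :=
    fun i => hasDerivAt_pi.1 ((hs t).hasDerivAt) i
  have hVd : HasDerivAt (fun τ => (1 / 2 : ℝ) * (∑ i, (s τ i) ^ 2)
      + (1 / (2 * γ)) * (K τ - Kstar) ^ 2)
      ((∑ i, s t i * deriv s t i) + (1 / γ) * (K t - Kstar) * deriv K t) t := by
    have h1 : HasDerivAt (fun τ => ∑ i, (s τ i) ^ 2) (∑ i, 2 * s t i * deriv s t i) t := by
      apply HasDerivAt.fun_sum
      intro i _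
      have := (hsi i).fun_pow 2
      exact this.congr_deriv (by push_cast; ring)
    have h2 : HasDerivAt (fun τ => (K τ - Kstar) ^ 2) (2 * (K t - Kstar) * deriv K t) t := by
      have := (((hKdiff t).hasDerivAt).sub_const Kstar).fun_pow 2
      exact this.congr_deriv (by push_cast; ring)
    have h3 := (h1.const_mul (1 / 2 : ℝ)).add (h2.const_mul (1 / (2 * γ)))
    have e1 : (1 / 2 : ℝ) * (∑ i, 2 * s t i * deriv s t i) = ∑ i, s t i * deriv s t i := by
      rw [Finset.mul_sum]; exact Finset.sum_congr rfl fun i _ => by ring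
    have e2 : (1 / (2 * γ)) * (2 * (K t - Kstar) * deriv K t)
        = (1 / γ) * (K t - Kstar) * deriv K t := by
      field_simp
    rw [← e1, ← e2]; exact h3
  have hDV : deriv (fun τ => (1 / 2 : ℝ) * (∑ i, (s τ i) ^ 2)
      + (1 / (2 * γ)) * (K τ - Kstar) ^ 2) t
      = (∑ i, s t i * deriv s t i) + (1 / γ) * (K t - Kstar) * deriv K t := hVd.deriv
  rw [hDV]
  -- rewrite s' and K'
  have hderiv_s : ∀ i, deriv s t i = (1 / m t) * u t i + d t i := by
    intro i; rw [hsd t]; simp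
  have hsum : (∑ i, s t i * deriv s t i)
      = -(K t / (m t * ε)) * S ^ 2 + (∑ i, s t i * d t i) := by
    rw [← hS2, Finset.mul_sum, ← Finset.sum_add_distrib]
    apply Finset.sum_congr rfl
    intro i _
    rw [hderiv_s i, hu t]
    simp only [Pi.smul_apply, smul_eq_mul]
    field_simp

  have hKd : deriv K t = η * ((K t / ε) * S - K t + K₀) := by
    rw [hKlaw t ht, hnu]
  rw [hsum, hKd]
  -- strict bound on disturbance term
  clear_value S Δ
  have hsdB : (∑ i, s t i * d t i) < S * Dbar := by
    calc (∑ i, s t i * d t i) ≤ S * norm2 (d t) := hSdef ▸ cauchy3 (s t) (d t)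
      _ < S * Dbar := by
          apply mul_lt_mul_of_pos_left (hd t) hSpos
  -- key constant inequality : γ * (lamK * mmax + ε) ≤ η * K₀ * mmax
  have hγ3 : γ * (lamK * mmax + ε) ≤ η * K₀ * mmax := by
    have hden : 0 < lamK * mmin + ε := by positivity
    rw [lt_div_iff₀ hden] at hγ2
    have hγl : γ * lamK ≤ η * K₀ := by
      have h1 : γ * lamK * mmin ≤ η * K₀ * mmin := by nlinarith [mul_pos hγ hε]
      exact le_of_mul_le_mul_right (by linarith) hm
    nlinarith [mul_le_mul_of_nonneg_right hγl (sub_nonneg.2 hmm)]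
  -- the three intermediate bounds
  have hA : -(K t / (m t * ε)) * S ^ 2 ≤ -(K t / mmax) * S := by
    rw [neg_mul, neg_mul, neg_le_neg_iff]
    calc (K t / mmax) * S ≤ (K t / m t) * S := by
          gcongr
      _ = (K t / (m t * ε)) * (ε * S) := by field_simp
      _ ≤ (K t / (m t * ε)) * S ^ 2 := by
          have h1 : ε * S ≤ S ^ 2 := by nlinarith
          have h2 : 0 ≤ K t / (m t * ε) := by positivity
          exact mul_le_mul_of_nonneg_left h1 h2
  have hB : (1 / γ) * (K t - Kstar) * (η * ((K t / ε) * S - K t + K₀))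
      ≤ -(η * K₀ / (γ * ε)) * Δ * S := by
    have hkey : (K₀ / ε) * S ≤ (K t / ε) * S - K t + K₀ := by
      rw [← sub_nonneg]
      have heq : (K t / ε) * S - K t + K₀ - (K₀ / ε) * S = ((K t - K₀) * (S - ε)) / ε := by
        field_simp; ring
      rw [heq]
      apply div_nonneg _ hε.le
      apply mul_nonneg <;> linarith
    have hfac : (1 / γ) * (K t - Kstar) * η ≤ 0 := by
      apply mul_nonpos_of_nonpos_of_nonneg _ hη.le
      apply mul_nonpos_of_nonneg_of_nonpos (by positivity)
      linarith
    calc (1 / γ) * (K t - Kstar) * (η * ((K t / ε) * S - K t + K₀))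
        = ((1 / γ) * (K t - Kstar) * η) * ((K t / ε) * S - K t + K₀) := by ring
      _ ≤ ((1 / γ) * (K t - Kstar) * η) * ((K₀ / ε) * S) := by
          apply mul_le_mul_of_nonpos_left hkey hfac
      _ = -(η * K₀ / (γ * ε)) * Δ * S := by
          simp only [hΔdef]; field_simp; ring
  -- combine into the linear bound
  have hcore : -(K t / mmax) * S + S * Dbar + (-(η * K₀ / (γ * ε)) * Δ * S)
      ≤ -(((Kstar - mmax * Dbar) / mmax) * S + lamK * Δ) := by
    rw [← sub_nonpos]
    have heq : -(K t / mmax) * S + S * Dbar + (-(η * K₀ / (γ * ε)) * Δ * S)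
        - (-(((Kstar - mmax * Dbar) / mmax) * S + lamK * Δ))
        = Δ * (S / mmax + lamK - (η * K₀ / (γ * ε)) * S) := by
      simp only [hΔdef]
      field_simp
      ring
    rw [heq]
    apply mul_nonpos_of_nonneg_of_nonpos hΔ
    rw [sub_nonpos]
    have h5a : S / mmax + lamK ≤ S * ((lamK * mmax + ε) / (ε * mmax)) := by
      rw [← sub_nonneg]
      have heq2 : S * ((lamK * mmax + ε) / (ε * mmax)) - (S / mmax + lamK)
          = (lamK * (S - ε)) / ε := by field_simp; ring
      rw [heq2]
      apply div_nonneg _ hε.le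
      apply mul_nonneg hlamK.le
      linarith
    have h5b : (lamK * mmax + ε) / (ε * mmax) ≤ η * K₀ / (γ * ε) := by
      rw [div_le_div_iff₀ (by positivity) (by positivity)]
      nlinarith [hγ3]
    calc S / mmax + lamK ≤ S * ((lamK * mmax + ε) / (ε * mmax)) := h5a
      _ ≤ S * (η * K₀ / (γ * ε)) := by
          apply mul_le_mul_of_nonneg_left h5b hSpos.le
      _ = (η * K₀ / (γ * ε)) * S := by ring
  -- bound on lam * sqrt V
  have hV : Real.sqrt ((1 / 2 : ℝ) * (∑ i, (s t i) ^ 2) + (1 / (2 * γ)) * (K t - Kstar) ^ 2)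
      ≤ S / Real.sqrt 2 + Δ / Real.sqrt (2 * γ) := by
    rw [hS2]
    have h1 : (K t - Kstar) ^ 2 = Δ ^ 2 := by rw [hΔdef]; ring
    rw [h1]
    calc Real.sqrt ((1 / 2 : ℝ) * S ^ 2 + (1 / (2 * γ)) * Δ ^ 2)
        ≤ Real.sqrt ((1 / 2 : ℝ) * S ^ 2) + Real.sqrt ((1 / (2 * γ)) * Δ ^ 2) :=
          sqrt_add_le' (by positivity) (by positivity)
      _ = S / Real.sqrt 2 + Δ / Real.sqrt (2 * γ) := by
          rw [show (1 / 2 : ℝ) * S ^ 2 = (S / Real.sqrt 2) ^ 2 by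
              rw [div_pow, Real.sq_sqrt (by norm_num : (0:ℝ) ≤ 2)]; ring,
            show (1 / (2 * γ)) * Δ ^ 2 = (Δ / Real.sqrt (2 * γ)) ^ 2 by
              rw [div_pow, Real.sq_sqrt (by positivity : (0:ℝ) ≤ 2 * γ)]; ring]
          rw [Real.sqrt_sq (by positivity), Real.sqrt_sq (by positivity)]
  have hlam : -(((Kstar - mmax * Dbar) / mmax) * S + lamK * Δ)
      ≤ -(Real.sqrt 2 * min ((Kstar - mmax * Dbar) / mmax) (lamK * Real.sqrt γ)) *
        Real.sqrt ((1 / 2 : ℝ) * (∑ i, (s t i) ^ 2) + (1 / (2 * γ)) * (K t - Kstar) ^ 2) := by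
    rw [neg_mul, neg_le_neg_iff]
    have hmin0 : 0 ≤ min ((Kstar - mmax * Dbar) / mmax) (lamK * Real.sqrt γ) := by
      apply le_min
      · apply div_nonneg (by linarith) hmmax.le
      · positivity
    have hlamnn : 0 ≤ Real.sqrt 2 * min ((Kstar - mmax * Dbar) / mmax) (lamK * Real.sqrt γ) := by
      positivity
    calc Real.sqrt 2 * min ((Kstar - mmax * Dbar) / mmax) (lamK * Real.sqrt γ) *
          Real.sqrt ((1 / 2 : ℝ) * (∑ i, (s t i) ^ 2) + (1 / (2 * γ)) * (K t - Kstar) ^ 2)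
        ≤ Real.sqrt 2 * min ((Kstar - mmax * Dbar) / mmax) (lamK * Real.sqrt γ) *
          (S / Real.sqrt 2 + Δ / Real.sqrt (2 * γ)) := by
          apply mul_le_mul_of_nonneg_left hV hlamnn
      _ ≤ ((Kstar - mmax * Dbar) / mmax) * S + lamK * Δ := by
          have hs2 : (0:ℝ) < Real.sqrt 2 := by positivity
          have hsg : (0:ℝ) < Real.sqrt γ := Real.sqrt_pos.2 hγ
          have h2γ : Real.sqrt (2 * γ) = Real.sqrt 2 * Real.sqrt γ :=
            Real.sqrt_mul (by norm_num) γ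
          rw [mul_add, h2γ]
          apply add_le_add
          · have : Real.sqrt 2 * min ((Kstar - mmax * Dbar) / mmax) (lamK * Real.sqrt γ) *
                (S / Real.sqrt 2) = min ((Kstar - mmax * Dbar) / mmax) (lamK * Real.sqrt γ) * S := by
              field_simp

            rw [this]
            apply mul_le_mul_of_nonneg_right (min_le_left _ _) hSpos.le
          · have : Real.sqrt 2 * min ((Kstar - mmax * Dbar) / mmax) (lamK * Real.sqrt γ) *
                (Δ / (Real.sqrt 2 * Real.sqrt γ))
                = min ((Kstar - mmax * Dbar) / mmax) (lamK * Real.sqrt γ) * (Δ / Real.sqrt γ) := by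
              field_simp

            rw [this]
            calc min ((Kstar - mmax * Dbar) / mmax) (lamK * Real.sqrt γ) * (Δ / Real.sqrt γ)
                ≤ (lamK * Real.sqrt γ) * (Δ / Real.sqrt γ) := by
                  apply mul_le_mul_of_nonneg_right (min_le_right _ _) (by positivity)
              _ = lamK * Δ := by field_simp
  -- final chain
  calc -(K t / (m t * ε)) * S ^ 2 + (∑ i, s t i * d t i)
        + (1 / γ) * (K t - Kstar) * (η * ((K t / ε) * S - K t + K₀))
      < -(K t / mmax) * S + S * Dbar + (-(η * K₀ / (γ * ε)) * Δ * S) := by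
        have := add_le_add hA hB
        linarith [hsdB]
    _ ≤ -(((Kstar - mmax * Dbar) / mmax) * S + lamK * Δ) := hcore
    _ ≤ _ := hlam
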